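/- arXiv:1308.4732 — 2 statements merged into one kernel-verified Lean document; each statement's English description precedes it below -/
import Mathlib

section
/- Positive semidefinite case of the minimax problem: If λ₁ ≥ 0 (i.e. A is positive semidefinite), then there exists exactly one τ̄ ∈ (0, 1) satisfying the critical-point equation ½Σ_{i=1}^n f̂ᵢ²/(λᵢ+τ̄)² + d − (1/β)log(τ̄/(1−τ̄)) = 0, and x̄ = (A + τ̄I)⁻¹f is a global minimizer of Π₂ on ℝⁿ. -/
open Matrix


noncomputable def sig (t : ℝ) : ℝ := Real.exp t / (1 + Real.exp t)

theorem sig_pos (t : ℝ) : 0 < sig t := by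
  unfold sig; positivity

theorem sig_lt_one (t : ℝ) : sig t < 1 := by
  unfold sig
  rw [div_lt_one (by positivity)]; linarith [Real.exp_pos t]

theorem sig_log (t : ℝ) : Real.log (sig t / (1 - sig t)) = t := by
  have h : (0:ℝ) < 1 + Real.exp t := by positivity
  have h1 : 1 - sig t = 1 / (1 + Real.exp t) := by
    unfold sig; field_simp; ring
  rw [h1]
  have : sig t / (1 / (1 + Real.exp t)) = Real.exp t := by
    unfold sig; field_simp
  rw [this, Real.log_exp]

theorem sig_mono {s t : ℝ} (h : s ≤ t) : sig s ≤ sig t := by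
  unfold sig
  rw [div_le_div_iff₀ (by positivity) (by positivity)]
  have := Real.exp_le_exp.2 h
  nlinarith [Real.exp_pos s, Real.exp_pos t]

theorem sig_half_le {t : ℝ} (ht : 0 ≤ t) : (1:ℝ)/2 ≤ sig t := by
  have := sig_mono ht
  have h0 : sig 0 = 1/2 := by unfold sig; rw [Real.exp_zero]; norm_num
  linarith [h0 ▸ this]

theorem aux_exists_unique {n : ℕ} (lam : Fin n → ℝ) (hlam : ∀ i, 0 ≤ lam i)
    (fhat : Fin n → ℝ) (β : ℝ) (hβ : 0 < β) (d : ℝ) :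
    ∃! τ : ℝ, τ ∈ Set.Ioo (0:ℝ) 1 ∧
      (1/2) * (∑ i, fhat i ^ 2 / (lam i + τ) ^ 2) + d - (1/β) * Real.log (τ / (1 - τ)) = 0 := by
  set g : ℝ → ℝ := fun τ =>
    (1/2) * (∑ i, fhat i ^ 2 / (lam i + τ) ^ 2) + d - (1/β) * Real.log (τ / (1 - τ)) with hg
  -- strict antitonicity
  have ganti : ∀ τ₁ ∈ Set.Ioo (0:ℝ) 1, ∀ τ₂ ∈ Set.Ioo (0:ℝ) 1, τ₁ < τ₂ → g τ₂ < g τ₁ := by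
    rintro τ₁ ⟨h10, h11⟩ τ₂ ⟨h20, h21⟩ hlt
    have hsum : (∑ i, fhat i ^ 2 / (lam i + τ₂) ^ 2) ≤ ∑ i, fhat i ^ 2 / (lam i + τ₁) ^ 2 := by
      apply Finset.sum_le_sum
      intro i _
      have hi := hlam i
      exact div_le_div_of_nonneg_left (sq_nonneg _) (by positivity) (by nlinarith)
    have hlog : Real.log (τ₁ / (1 - τ₁)) < Real.log (τ₂ / (1 - τ₂)) := by
      apply Real.log_lt_log (div_pos h10 (by linarith))
      rw [div_lt_div_iff₀ (by linarith) (by linarith)]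
      nlinarith
    have hβ' : 0 < 1/β := by positivity
    simp only [hg]
    nlinarith
  -- endpoints
  set C : ℝ := 2 * (∑ i, fhat i ^ 2) + d with hC
  set a : ℝ := sig (β * d) with ha
  set b : ℝ := sig (β * max C 0) with hb
  have ha0 : 0 < a := sig_pos _
  have ha1 : a < 1 := sig_lt_one _
  have hb0 : 0 < b := sig_pos _
  have hb1 : b < 1 := sig_lt_one _
  have hdC : d ≤ max C 0 := by
    have : d ≤ C := by
      have : 0 ≤ ∑ i, fhat i ^ 2 := Finset.sum_nonneg fun i _ => sq_nonneg _
      simp only [hC]; linarith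
    exact this.trans (le_max_left _ _)
  have hab : a ≤ b := sig_mono (by nlinarith)
  have hga : 0 ≤ g a := by
    have hlog : Real.log (a / (1 - a)) = β * d := sig_log _
    have hsum : 0 ≤ ∑ i, fhat i ^ 2 / (lam i + a) ^ 2 :=
      Finset.sum_nonneg fun i _ => by positivity
    simp only [hg, hlog]
    field_simp
    linarith
  have hgb : g b ≤ 0 := by
    have hlog : Real.log (b / (1 - b)) = β * max C 0 := sig_log _
    have hbhalf : (1:ℝ)/2 ≤ b := sig_half_le (by positivity)
    have hsum : (∑ i, fhat i ^ 2 / (lam i + b) ^ 2) ≤ ∑ i, 4 * fhat i ^ 2 := by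
      apply Finset.sum_le_sum
      intro i _
      have hi := hlam i
      have h4 : (1:ℝ)/4 ≤ (lam i + b)^2 := by nlinarith
      calc fhat i ^ 2 / (lam i + b) ^ 2 ≤ fhat i ^ 2 / (1/4) :=
            div_le_div_of_nonneg_left (sq_nonneg _) (by norm_num) h4
        _ = 4 * fhat i ^ 2 := by ring
    have h4sum : (∑ i, (4:ℝ) * fhat i ^ 2) = 4 * ∑ i, fhat i ^ 2 := by
      rw [Finset.mul_sum]
    have hCmax : C ≤ max C 0 := le_max_left _ _
    simp only [hg, hlog]
    have : (1/β) * (β * max C 0) = max C 0 := by field_simp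
    rw [this]
    simp only [hC] at hCmax
    linarith
  -- continuity on [a,b]
  have hcont : ContinuousOn g (Set.Icc a b) := by
    have hsub : ∀ x ∈ Set.Icc a b, 0 < x ∧ x < 1 := by
      rintro x ⟨hx1, hx2⟩; exact ⟨lt_of_lt_of_le ha0 hx1, lt_of_le_of_lt hx2 hb1⟩
    apply ContinuousOn.sub
    · apply ContinuousOn.add
      · apply ContinuousOn.mul continuousOn_const
        apply continuousOn_finset_sum
        intro i _
        apply ContinuousOn.div continuousOn_const
        · fun_prop
        · intro x hx
          have := hlam i
          have := (hsub x hx).1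
          positivity
      · exact continuousOn_const
    · apply ContinuousOn.mul continuousOn_const
      apply ContinuousOn.log
      · apply ContinuousOn.div continuousOn_id (by fun_prop)
        intro x hx
        have := (hsub x hx).2
        intro h; linarith [sub_eq_zero.mp h]
      · intro x hx
        have h1 := (hsub x hx).1
        have h2 := (hsub x hx).2
        exact ne_of_gt (div_pos h1 (by linarith))
  -- IVT
  have hmem : (0:ℝ) ∈ Set.Icc (g b) (g a) := ⟨hgb, hga⟩
  obtain ⟨τ, hτmem, hτ0⟩ := intermediate_value_Icc' hab hcont hmem
  have hτIoo : τ ∈ Set.Ioo (0:ℝ) 1 :=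
    ⟨lt_of_lt_of_le ha0 hτmem.1, lt_of_le_of_lt hτmem.2 hb1⟩
  refine ⟨τ, ⟨hτIoo, hτ0⟩, ?_⟩
  rintro τ' ⟨hτ'Ioo, hτ'0⟩
  have hgτ' : g τ' = 0 := hτ'0
  by_contra hne
  rcases lt_or_gt_of_ne hne with h | h
  · have := ganti τ' hτ'Ioo τ hτIoo h; rw [hτ0, hgτ'] at this; exact lt_irrefl 0 this
  · have := ganti τ hτIoo τ' hτ'Ioo h; rw [hτ0, hgτ'] at this; exact lt_irrefl 0 this


theorem aux_logexp (s sb : ℝ) :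
    (Real.exp sb / (1 + Real.exp sb)) * (s - sb)
      ≤ Real.log (1 + Real.exp s) - Real.log (1 + Real.exp sb) := by
  have h1 : (0:ℝ) < 1 + Real.exp s := by positivity
  have h2 : (0:ℝ) < 1 + Real.exp sb := by positivity
  set p := Real.exp sb / (1 + Real.exp sb) with hp
  have hp0 : 0 ≤ p := by positivity
  have hp1 : 0 ≤ 1 - p := by
    have : p ≤ 1 := by
      rw [hp, div_le_one h2]; linarith [Real.exp_pos sb]
    linarith
  have hc := convexOn_exp.2 (Set.mem_univ (s - sb)) (Set.mem_univ (0:ℝ)) hp0 hp1 (by ring)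
  simp only [smul_eq_mul, mul_zero, add_zero, Real.exp_zero, mul_one] at hc
  have key : Real.exp (p * (s - sb)) ≤ (1 + Real.exp s) / (1 + Real.exp sb) := by
    refine hc.trans_eq ?_
    rw [hp]
    field_simp
    rw [← Real.exp_add]
    ring_nf
  have := Real.log_le_log (Real.exp_pos _) key
  rw [Real.log_exp, Real.log_div (ne_of_gt h1) (ne_of_gt h2)] at this
  linarith

theorem aux_min {n : ℕ}
    (A : Matrix (Fin n) (Fin n) ℝ) (hA : A.IsSymm)
    (lam : Fin n → ℝ) (hlam : ∀ i, 0 ≤ lam i)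
    (U : Matrix (Fin n) (Fin n) ℝ) (hUorth : U * Uᵀ = 1)
    (hAeig : A = U * Matrix.diagonal lam * Uᵀ)
    (f : Fin n → ℝ) (fhat : Fin n → ℝ) (hfhat : fhat = Uᵀ.mulVec f)
    (β : ℝ) (hβ : 0 < β) (d : ℝ)
    (τ : ℝ) (hτ : τ ∈ Set.Ioo (0:ℝ) 1)
    (heq : (1/2) * (∑ i, fhat i ^ 2 / (lam i + τ) ^ 2) + d - (1/β) * Real.log (τ / (1 - τ)) = 0)
    (x : Fin n → ℝ) :
    (1/2) * (((A + τ • (1 : Matrix (Fin n) (Fin n) ℝ))⁻¹.mulVec f) ⬝ᵥ A.mulVec ((A + τ • (1 : Matrix (Fin n) (Fin n) ℝ))⁻¹.mulVec f)) - f ⬝ᵥ ((A + τ • (1 : Matrix (Fin n) (Fin n) ℝ))⁻¹.mulVec f)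
        + (1/β) * Real.log (1 + Real.exp (β * ((1/2) * (((A + τ • (1 : Matrix (Fin n) (Fin n) ℝ))⁻¹.mulVec f) ⬝ᵥ ((A + τ • (1 : Matrix (Fin n) (Fin n) ℝ))⁻¹.mulVec f)) + d)))
      ≤ (1/2) * (x ⬝ᵥ A.mulVec x) - f ⬝ᵥ x
        + (1/β) * Real.log (1 + Real.exp (β * ((1/2) * (x ⬝ᵥ x) + d))) := by
  obtain ⟨hτ0, hτ1⟩ := hτ
  have hUtU : Uᵀ * U = 1 := mul_eq_one_comm.mp hUorth
  set B : Matrix (Fin n) (Fin n) ℝ := A + τ • (1 : Matrix (Fin n) (Fin n) ℝ) with hB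
  have hBeig : B = U * Matrix.diagonal (fun i => lam i + τ) * Uᵀ := by
    rw [hB, hAeig]
    have h1 : Matrix.diagonal (fun i => lam i + τ)
        = Matrix.diagonal lam + τ • (1 : Matrix (Fin n) (Fin n) ℝ) := by
      rw [smul_one_eq_diagonal, Matrix.diagonal_add]
    rw [h1, Matrix.mul_add, Matrix.add_mul]
    congr 1
    rw [Matrix.mul_smul, Matrix.smul_mul, Matrix.mul_one, hUorth]
  have hdet : IsUnit B.det := by
    rw [hBeig, Matrix.det_mul, Matrix.det_mul, Matrix.det_diagonal]
    have hUU : U.det * Uᵀ.det = 1 := by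
      rw [← Matrix.det_mul, hUorth, Matrix.det_one]
    have hprod : (0:ℝ) < ∏ i, (lam i + τ) := by
      apply Finset.prod_pos
      intro i _
      have := hlam i; linarith
    refine isUnit_iff_ne_zero.mpr ?_
    intro h
    have h2 : U.det * (∏ i, (lam i + τ)) * Uᵀ.det = (∏ i, (lam i + τ)) * (U.det * Uᵀ.det) := by ring
    rw [h2, hUU, mul_one] at h
    exact ne_of_gt hprod h
  set xb : Fin n → ℝ := B⁻¹.mulVec f with hxb
  have hBxb : B.mulVec xb = f := by
    rw [hxb, Matrix.mulVec_mulVec, Matrix.mul_nonsing_inv B hdet, Matrix.one_mulVec]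
  set y : Fin n → ℝ := Uᵀ.mulVec xb with hy
  have hyi : ∀ i, (lam i + τ) * y i = fhat i := by
    intro i
    have h1 : Uᵀ.mulVec (B.mulVec xb) = fhat := by rw [hBxb, hfhat]
    rw [Matrix.mulVec_mulVec, hBeig] at h1
    have h2 : Uᵀ * (U * Matrix.diagonal (fun i => lam i + τ) * Uᵀ)
        = Matrix.diagonal (fun i => lam i + τ) * Uᵀ := by
      rw [← Matrix.mul_assoc, ← Matrix.mul_assoc, hUtU, Matrix.one_mul]
    rw [h2, ← Matrix.mulVec_mulVec] at h1
    have h3 := congrFun h1 i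
    rw [Matrix.mulVec_diagonal] at h3
    exact h3
  have hyval : ∀ i, y i = fhat i / (lam i + τ) := by
    intro i
    have hi : (0:ℝ) < lam i + τ := by have := hlam i; linarith
    field_simp
    rw [mul_comm]
    exact hyi i
  have hUy : U.mulVec y = xb := by
    rw [hy, Matrix.mulVec_mulVec, hUorth, Matrix.one_mulVec]
  have hnorm : xb ⬝ᵥ xb = ∑ i, fhat i ^ 2 / (lam i + τ) ^ 2 := by
    have h1 : xb ⬝ᵥ xb = y ⬝ᵥ y := by
      conv_lhs => rw [← hUy]
      rw [Matrix.dotProduct_mulVec, ← Matrix.mulVec_transpose,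
        Matrix.mulVec_mulVec, hUtU, Matrix.one_mulVec]
    rw [h1]
    unfold dotProduct
    apply Finset.sum_congr rfl
    intro i _
    rw [hyval i, div_mul_div_comm, ← pow_two, ← pow_two]
  have hpsd : ∀ v : Fin n → ℝ, 0 ≤ v ⬝ᵥ A.mulVec v := by
    intro v
    have h1 : A.mulVec v = U.mulVec ((Matrix.diagonal lam).mulVec (Uᵀ.mulVec v)) := by
      rw [hAeig, Matrix.mulVec_mulVec, Matrix.mulVec_mulVec]
    rw [h1, Matrix.dotProduct_mulVec, ← Matrix.mulVec_transpose]
    set w := Uᵀ.mulVec v with hw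
    unfold dotProduct
    apply Finset.sum_nonneg
    intro i _
    rw [Matrix.mulVec_diagonal]
    have := hlam i
    nlinarith [sq_nonneg (w i)]
  have hsym : ∀ u v : Fin n → ℝ, u ⬝ᵥ A.mulVec v = v ⬝ᵥ A.mulVec u := by
    intro u v
    rw [Matrix.dotProduct_mulVec, ← Matrix.mulVec_transpose, hA.eq, dotProduct_comm]
  have hf : f = A.mulVec xb + τ • xb := by
    rw [← hBxb, hB, Matrix.add_mulVec, Matrix.smul_mulVec, Matrix.one_mulVec]
  have hfx : f ⬝ᵥ x = xb ⬝ᵥ A.mulVec x + τ * (xb ⬝ᵥ x) := by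
    rw [hf, add_dotProduct, smul_dotProduct, smul_eq_mul,
      dotProduct_comm (A.mulVec xb) x, hsym x xb, dotProduct_comm xb x, dotProduct_comm x xb]
  have hfxb : f ⬝ᵥ xb = xb ⬝ᵥ A.mulVec xb + τ * (xb ⬝ᵥ xb) := by
    rw [hf, add_dotProduct, smul_dotProduct, smul_eq_mul,
      dotProduct_comm (A.mulVec xb) xb]
  have hQA : 0 ≤ x ⬝ᵥ A.mulVec x - 2*(xb ⬝ᵥ A.mulVec x) + xb ⬝ᵥ A.mulVec xb := by
    have h := hpsd (x - xb)
    have hexp : (x - xb) ⬝ᵥ A.mulVec (x - xb)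
        = x ⬝ᵥ A.mulVec x - 2*(xb ⬝ᵥ A.mulVec x) + xb ⬝ᵥ A.mulVec xb := by
      rw [Matrix.mulVec_sub, sub_dotProduct, dotProduct_sub,
        dotProduct_sub, hsym x xb]
      ring
    linarith [hexp ▸ h]
  have hQI : 0 ≤ x ⬝ᵥ x - 2*(xb ⬝ᵥ x) + xb ⬝ᵥ xb := by
    have h : 0 ≤ (x - xb) ⬝ᵥ (x - xb) :=
      Finset.sum_nonneg fun i _ => mul_self_nonneg _
    have hexp : (x - xb) ⬝ᵥ (x - xb)
        = x ⬝ᵥ x - 2*(xb ⬝ᵥ x) + xb ⬝ᵥ xb := by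
      rw [sub_dotProduct, dotProduct_sub, dotProduct_sub,
        dotProduct_comm x xb]
      ring
    linarith [hexp ▸ h]
  -- τ is the logistic value at the dual point
  have hlogeq : Real.log (τ / (1 - τ)) = β * ((1/2) * (xb ⬝ᵥ xb) + d) := by
    rw [hnorm]
    have hβ' : β ≠ 0 := ne_of_gt hβ
    field_simp at heq ⊢
    linarith
  have hτE : τ = Real.exp (β * ((1/2) * (xb ⬝ᵥ xb) + d))
      / (1 + Real.exp (β * ((1/2) * (xb ⬝ᵥ xb) + d))) := by
    have h2 : τ / (1 - τ) = Real.exp (β * ((1/2) * (xb ⬝ᵥ xb) + d)) := by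
      rw [← hlogeq, Real.exp_log (div_pos hτ0 (by linarith))]
    have hE : (0:ℝ) < Real.exp (β * ((1/2) * (xb ⬝ᵥ xb) + d)) := Real.exp_pos _
    rw [div_eq_iff (by linarith : (1:ℝ) - τ ≠ 0)] at h2
    rw [eq_div_iff (by positivity)]
    linear_combination h2
  have hL := aux_logexp (β * ((1/2) * (x ⬝ᵥ x) + d)) (β * ((1/2) * (xb ⬝ᵥ xb) + d))
  rw [← hτE] at hL
  have hL' : τ * ((1/2) * (x ⬝ᵥ x)) - τ * ((1/2) * (xb ⬝ᵥ xb))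
      ≤ (1/β) * Real.log (1 + Real.exp (β * ((1/2) * (x ⬝ᵥ x) + d)))
        - (1/β) * Real.log (1 + Real.exp (β * ((1/2) * (xb ⬝ᵥ xb) + d))) := by
    have h := mul_le_mul_of_nonneg_left hL (le_of_lt (by positivity : (0:ℝ) < 1/β))
    have hid : (1/β) * (τ * ((β * ((1/2) * (x ⬝ᵥ x) + d)) - (β * ((1/2) * (xb ⬝ᵥ xb) + d))))
        = τ * ((1/2) * (x ⬝ᵥ x)) - τ * ((1/2) * (xb ⬝ᵥ xb)) := by
      field_simp
      ring
    have hid2 : (1/β) * (Real.log (1 + Real.exp (β * ((1/2) * (x ⬝ᵥ x) + d)))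
        - Real.log (1 + Real.exp (β * ((1/2) * (xb ⬝ᵥ xb) + d))))
        = (1/β) * Real.log (1 + Real.exp (β * ((1/2) * (x ⬝ᵥ x) + d)))
          - (1/β) * Real.log (1 + Real.exp (β * ((1/2) * (xb ⬝ᵥ xb) + d))) := by ring
    rw [hid, hid2] at h
    exact h
  have hτQI : 0 ≤ τ * (x ⬝ᵥ x - 2*(xb ⬝ᵥ x) + xb ⬝ᵥ xb) := mul_nonneg hτ0.le hQI
  rw [hfx, hfxb]
  nlinarith [hQA, hτQI, hL']


/-- **Positive semidefinite case of the minimax problem**: if `λ₁ ≥ 0` then the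
dual critical point in `(0,1)` exists, is unique, and yields the global
minimizer of `Π₂`. -/
theorem minimax_psd_case
    {n : ℕ} (hn : 0 < n)
    (A : Matrix (Fin n) (Fin n) ℝ) (hA : A.IsSymm)
    (lam : Fin n → ℝ) (hsort : ∀ i j : Fin n, i ≤ j → lam i ≤ lam j)
    (U : Matrix (Fin n) (Fin n) ℝ) (hUorth : U * Uᵀ = 1)
    (hAeig : A = U * Matrix.diagonal lam * Uᵀ)
    (f : Fin n → ℝ) (fhat : Fin n → ℝ) (hfhat : fhat = Uᵀ.mulVec f)
    (lam1 : ℝ) (hlam1 : lam1 = lam ⟨0, hn⟩)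
    (β : ℝ) (hβ : 0 < β) (d : ℝ) (hlam : 0 ≤ lam1)
    (Pi2 : (Fin n → ℝ) → ℝ)
    (hPi2 : Pi2 = fun x : Fin n → ℝ => (1/2) * (x ⬝ᵥ A.mulVec x) - f ⬝ᵥ x
        + (1/β) * Real.log (1 + Real.exp (β * ((1/2) * (x ⬝ᵥ x) + d)))) :
    (∃! τ : ℝ, τ ∈ Set.Ioo (0 : ℝ) 1 ∧ (1/2) * (∑ i, fhat i ^ 2 / (lam i + τ) ^ 2) + d - (1/β) * Real.log (τ / (1 - τ)) = 0) ∧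
    (∀ τ ∈ Set.Ioo (0 : ℝ) 1, (1/2) * (∑ i, fhat i ^ 2 / (lam i + τ) ^ 2) + d - (1/β) * Real.log (τ / (1 - τ)) = 0 →
      ∀ x : Fin n → ℝ,
        Pi2 ((A + τ • (1 : Matrix (Fin n) (Fin n) ℝ))⁻¹.mulVec f) ≤ Pi2 x) := by
  have hlam' : ∀ i, 0 ≤ lam i := by
    intro i
    have h0 : (⟨0, hn⟩ : Fin n) ≤ i := by simp [Fin.le_def]
    have := hsort ⟨0, hn⟩ i h0
    rw [hlam1] at hlam
    linarith
  constructor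
  · exact aux_exists_unique lam hlam' fhat β hβ d
  · intro τ hτ heq x
    simp only [hPi2]
    exact aux_min A hA lam hlam' U hUorth hAeig f fhat hfhat β hβ d τ hτ heq x
end

section
/- Unboundedness of the minimax problem: If the smallest eigenvalue λ₁ of A satisfies λ₁ < −1, then the function Π₂(x) = ½xᵀAx − fᵀx + (1/β)log(1 + exp(β(½xᵀx + d))) is unbounded below on ℝⁿ, i.e. inf_{x ∈ ℝⁿ} Π₂(x) = −∞. -/
open Matrix
set_option maxHeartbeats 1000000

lemma log_one_add_exp_le (y : ℝ) :
    Real.log (1 + Real.exp y) ≤ Real.log 2 + |y| := by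
  have h1 : Real.exp y ≤ Real.exp |y| := Real.exp_le_exp.mpr (le_abs_self y)
  have h2 : (1 : ℝ) ≤ Real.exp |y| := Real.one_le_exp (abs_nonneg y)
  have h3 : 1 + Real.exp y ≤ 2 * Real.exp |y| := by linarith
  calc Real.log (1 + Real.exp y) ≤ Real.log (2 * Real.exp |y|) := by
        apply Real.log_le_log (by positivity) h3
    _ = Real.log 2 + |y| := by rw [Real.log_mul (by norm_num) (Real.exp_ne_zero _),
        Real.log_exp]

/-- **Unboundedness of the minimax problem**: if the smallest eigenvalue of `A`
is `< -1`, then `Π₂` is unbounded below on `ℝⁿ`. -/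
theorem minimax_unbounded
    {n : ℕ} (hn : 0 < n)
    (A : Matrix (Fin n) (Fin n) ℝ) (hA : A.IsSymm)
    (lam1 : ℝ)
    (hlam1eig : ∃ v : Fin n → ℝ, v ≠ 0 ∧ A.mulVec v = lam1 • v)
    (hlam1min : ∀ μ : ℝ, (∃ v : Fin n → ℝ, v ≠ 0 ∧ A.mulVec v = μ • v) → lam1 ≤ μ)
    (f : Fin n → ℝ) (β : ℝ) (hβ : 0 < β) (d : ℝ)
    (Pi2 : (Fin n → ℝ) → ℝ)
    (hPi2 : Pi2 = fun x : Fin n → ℝ => (1/2) * (x ⬝ᵥ A.mulVec x) - f ⬝ᵥ x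
        + (1/β) * Real.log (1 + Real.exp (β * ((1/2) * (x ⬝ᵥ x) + d))))
    (hlam : lam1 < -1) :
    ¬ BddBelow (Set.range Pi2) := by
  obtain ⟨v, hv0, hEig⟩ := hlam1eig
  set s : ℝ := v ⬝ᵥ v with hs_def
  have hs : 0 < s := by
    have h0 : 0 ≤ s := Finset.sum_nonneg fun i _ => mul_self_nonneg _
    rcases h0.lt_or_eq with h | h
    · exact h
    · exact absurd (dotProduct_self_eq_zero.mp h.symm) hv0
  rintro ⟨b, hb⟩
  set e : ℝ := |f ⬝ᵥ v| with he_def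
  have he : 0 ≤ e := abs_nonneg _
  set C : ℝ := Real.log 2 / β + |d| with hC_def
  set c : ℝ := -(lam1 + 1) / 2 * s with hc_def
  have hc : 0 < c := by
    apply mul_pos _ hs
    linarith
  set t : ℝ := max 1 ((e + |C - b| + 1) / c) with ht_def
  have ht1 : 1 ≤ t := le_max_left _ _
  have ht0 : 0 ≤ t := le_trans zero_le_one ht1
  have hct : e + |C - b| + 1 ≤ c * t := by
    have h := le_max_right 1 ((e + |C - b| + 1) / c)
    calc e + |C - b| + 1 = c * ((e + |C - b| + 1) / c) := by field_simp
      _ ≤ c * t := mul_le_mul_of_nonneg_left h hc.le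
  -- evaluate Pi2 (t • v)
  have h1 : (t • v) ⬝ᵥ A.mulVec (t • v) = lam1 * s * t ^ 2 := by
    rw [Matrix.mulVec_smul, hEig]
    simp only [smul_dotProduct, dotProduct_smul, smul_eq_mul, ← hs_def]
    ring
  have h2 : f ⬝ᵥ (t • v) = (f ⬝ᵥ v) * t := by
    simp only [dotProduct_smul, smul_eq_mul]; ring
  have h3 : (t • v) ⬝ᵥ (t • v) = s * t ^ 2 := by
    simp only [smul_dotProduct, dotProduct_smul, smul_eq_mul, ← hs_def]; ring
  have hval : Pi2 (t • v) = (1/2) * (lam1 * s * t ^ 2) - (f ⬝ᵥ v) * t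
      + (1/β) * Real.log (1 + Real.exp (β * ((1/2) * (s * t ^ 2) + d))) := by
    rw [hPi2]; simp only [h1, h2, h3]
  -- bound the log term
  have habs : |β * ((1/2) * (s * t ^ 2) + d)| ≤ β * ((1/2) * (s * t ^ 2) + |d|) := by
    rw [abs_mul, abs_of_pos hβ]
    refine mul_le_mul_of_nonneg_left ?_ hβ.le
    calc |(1/2) * (s * t ^ 2) + d| ≤ |(1/2) * (s * t ^ 2)| + |d| := abs_add_le _ _
      _ = (1/2) * (s * t ^ 2) + |d| := by rw [abs_of_nonneg (by positivity)]
  have hkey : (1/β) * Real.log (1 + Real.exp (β * ((1/2) * (s * t ^ 2) + d)))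
      ≤ Real.log 2 / β + ((1/2) * (s * t ^ 2) + |d|) := by
    have hy := log_one_add_exp_le (β * ((1/2) * (s * t ^ 2) + d))
    have h4 : Real.log (1 + Real.exp (β * ((1/2) * (s * t ^ 2) + d)))
        ≤ Real.log 2 + β * ((1/2) * (s * t ^ 2) + |d|) := by linarith
    calc (1/β) * Real.log (1 + Real.exp (β * ((1/2) * (s * t ^ 2) + d)))
        ≤ (1/β) * (Real.log 2 + β * ((1/2) * (s * t ^ 2) + |d|)) :=
          mul_le_mul_of_nonneg_left h4 (by positivity)
      _ = Real.log 2 / β + ((1/2) * (s * t ^ 2) + |d|) := by field_simp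
  have hft : -((f ⬝ᵥ v) * t) ≤ e * t := by
    have h5 : -(f ⬝ᵥ v) ≤ e := neg_le_abs _
    nlinarith
  have hbound : Pi2 (t • v) ≤ -c * t ^ 2 + e * t + C := by
    rw [hval, hC_def]
    have hcc : -c * t ^ 2 = (1/2) * ((lam1 + 1) * s) * t ^ 2 := by
      rw [hc_def]; ring
    nlinarith [hkey, hft]
  have hble : b ≤ Pi2 (t • v) := hb (Set.mem_range_self _)
  have hCb : C - b ≤ |C - b| := le_abs_self _
  nlinarith [mul_le_mul_of_nonneg_right hct ht0,
    mul_le_mul_of_nonneg_left ht1 (by positivity : (0:ℝ) ≤ |C - b| + 1)]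
end
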